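/- Let p be a prime and let c be the coloring of ℕ⁺ defined by c(n) = m mod p where n = p^s·m with p ∤ m. If a partition of the color set (ℤ/pℤ)ˣ into two classes of sizes ⌊(p−1)/2⌋ and ⌈(p−1)/2⌉ is fixed, then the induced 2-coloring f : ℕ⁺ → {−1,+1} satisfies |∑_{i=1}^{p−1} f(i·n)| ≤ 1 for every n ≥ 1, i.e., every cascade of length p−1 is balanced. -/

import Mathlib

open Finset

/-- The color of `n`: write `n = p^s * m` with `p ∤ m`; the color is `m mod p`. -/
def cascadeColor (p n : ℕ) : ZMod p := ((n / p ^ (n.factorization p) : ℕ) : ZMod p)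

/-- Splitting the `p-1` colors of the rainbow coloring into two classes of sizes
`⌊(p-1)/2⌋` and `⌈(p-1)/2⌉` yields a `2`-coloring `f : ℕ⁺ → {-1,+1}` under which
every cascade of length `p-1` is balanced: `|∑_{i=1}^{p-1} f(i·n)| ≤ 1`. -/
theorem cascade_balanced_from_rainbow (p : ℕ) (hp : p.Prime)
    (S : Finset (ZMod p)) (hS0 : ∀ x ∈ S, x ≠ 0) (hScard : S.card = (p - 1) / 2)
    (f : ℕ → ℤ) (hf : ∀ n : ℕ, f n = if cascadeColor p n ∈ S then 1 else -1) :
    ∀ n : ℕ, 1 ≤ n → |∑ i ∈ Finset.Icc 1 (p - 1), f (i * n)| ≤ 1 := by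
  haveI : Fact p.Prime := ⟨hp⟩
  intro n hn
  have hn0 : n ≠ 0 := by omega
  set s := n.factorization p with hs
  set m := n / p ^ s with hm
  have hpm : ¬ p ∣ m := Nat.not_dvd_ordCompl hp hn0
  have hc0 : (m : ZMod p) ≠ 0 := by
    rw [Ne, ZMod.natCast_eq_zero_iff]
    exact hpm
  have hcast : ∀ i ∈ Finset.Icc 1 (p - 1), (i : ZMod p) ≠ 0 := by
    intro i hi
    simp only [Finset.mem_Icc] at hi
    rw [Ne, ZMod.natCast_eq_zero_iff]
    exact Nat.not_dvd_of_pos_of_lt (by omega) (by have := hp.two_le; omega)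
  have key : ∀ i ∈ Finset.Icc 1 (p - 1), cascadeColor p (i * n) = (i : ZMod p) * m := by
    intro i hi
    simp only [Finset.mem_Icc] at hi
    have hi0 : i ≠ 0 := by omega
    have hpi : ¬ p ∣ i := Nat.not_dvd_of_pos_of_lt (by omega) (by have := hp.two_le; omega)
    have hfi : i.factorization p = 0 := Nat.factorization_eq_zero_of_not_dvd hpi
    have h1 : (i * n).factorization p = s := by
      rw [Nat.factorization_mul hi0 hn0]; simp [hfi, hs]
    have h2 : i * n / p ^ ((i * n).factorization p) = i * m := by
      have h3 := Nat.ordCompl_mul i n p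
      rw [h3, hfi]
      simp [hm, hs]
    unfold cascadeColor
    rw [h2]
    push_cast
    ring
  -- rewrite the sum
  have hsum : ∑ i ∈ Finset.Icc 1 (p - 1), f (i * n)
      = ∑ i ∈ Finset.Icc 1 (p - 1), (if (i : ZMod p) * m ∈ S then (1 : ℤ) else -1) := by
    refine Finset.sum_congr rfl fun i hi => ?_
    rw [hf, key i hi]
  rw [hsum]
  -- reindex via the injection i ↦ i * m
  set g : ℕ → ZMod p := fun i => (i : ZMod p) * m with hg
  have hinj : ∀ x ∈ Finset.Icc 1 (p - 1), ∀ y ∈ Finset.Icc 1 (p - 1), g x = g y → x = y := by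
    intro x hx y hy hxy
    have : (x : ZMod p) = (y : ZMod p) := by
      have := mul_right_cancel₀ hc0 hxy
      exact this
    simp only [Finset.mem_Icc] at hx hy
    have hxv : ((x : ZMod p)).val = x := ZMod.val_cast_of_lt (by have := hp.two_le; omega)
    have hyv : ((y : ZMod p)).val = y := ZMod.val_cast_of_lt (by have := hp.two_le; omega)
    rw [← hxv, ← hyv, this]
  have himg : (Finset.Icc 1 (p - 1)).image g = (Finset.univ : Finset (ZMod p)).erase 0 := by
    apply Finset.eq_of_subset_of_card_le
    · intro x hx
      simp only [Finset.mem_image] at hx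
      obtain ⟨i, hi, rfl⟩ := hx
      refine Finset.mem_erase.mpr ⟨mul_ne_zero (hcast i hi) hc0, Finset.mem_univ _⟩
    · rw [Finset.card_erase_of_mem (Finset.mem_univ _), Finset.card_univ, ZMod.card,
        Finset.card_image_of_injOn hinj, Nat.card_Icc]
      omega
  have hS_sub : S ⊆ (Finset.univ : Finset (ZMod p)).erase 0 := by
    intro x hx
    exact Finset.mem_erase.mpr ⟨hS0 x hx, Finset.mem_univ _⟩
  have hsum2 : ∑ i ∈ Finset.Icc 1 (p - 1), (if (i : ZMod p) * m ∈ S then (1 : ℤ) else -1)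
      = ∑ x ∈ (Finset.univ : Finset (ZMod p)).erase 0, (if x ∈ S then (1 : ℤ) else -1) := by
    rw [← himg, Finset.sum_image hinj]
  rw [hsum2]
  set T := (Finset.univ : Finset (ZMod p)).erase 0 with hT
  have hsplit : ∀ x : ZMod p, (if x ∈ S then (1 : ℤ) else -1)
      = 2 * (if x ∈ S then (1 : ℤ) else 0) - 1 := by
    intro x; split <;> ring
  rw [Finset.sum_congr rfl fun x _ => hsplit x, Finset.sum_sub_distrib,
    ← Finset.mul_sum, Finset.sum_ite_mem, Finset.sum_const, Finset.sum_const]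
  have hTS : T ∩ S = S := Finset.inter_eq_right.mpr hS_sub
  have hTcard : T.card = p - 1 := by
    rw [hT, Finset.card_erase_of_mem (Finset.mem_univ _), Finset.card_univ, ZMod.card]
  rw [hTS, hTcard, hScard]
  simp only [nsmul_eq_mul, mul_one]
  have h2 : 2 * ((p - 1) / 2) ≤ p - 1 := Nat.mul_div_le _ 2 |>.trans_eq (by ring_nf) |>.trans (le_refl _)
  have h3 := Nat.div_add_mod (p - 1) 2
  have h4 : (p - 1) % 2 < 2 := Nat.mod_lt _ (by norm_num)
  rw [abs_le]
  constructor <;> push_cast <;> omega
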